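/- For each integer d ≥ 2 define Schmidt coefficients λ₁(d) = (1 − 1/√d)^{1/2} and λ_k(d) = (1/(√d(d−1)))^{1/2} for k = 2,…,d (these are the Schmidt coefficients of the state |η_d⟩ = λ₁|11⟩ + Σ_{k=2}^{d} λ_k|kk⟩, and Σ_{k=1}^{d} λ_k(d)² = 1). Then: (a) 2·log₂(Σ_{k=1}^{d} λ_k(d)) → ∞ as d → ∞ (equivalently Σ_k λ_k(d) → ∞), so the max-entanglement/log-robustness E_max(η_d) diverges; while (b) the entanglement entropy −Σ_{k=1}^{d} λ_k(d)² log₂(λ_k(d)²) → 0 as d → ∞. -/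

import Mathlib

open Filter

noncomputable section

/-- The Schmidt coefficients of the state |η_d⟩: λ₁ = (1−1/√d)^{1/2} and
λ_k = (1/(√d(d−1)))^{1/2} for k = 2,…,d. -/
def lam (d k : ℕ) : ℝ :=
  if k = 1 then Real.sqrt (1 - 1 / Real.sqrt d)
  else Real.sqrt (1 / (Real.sqrt d * ((d : ℝ) - 1)))

lemma one_le_sqrtd {d : ℕ} (hd : 2 ≤ d) : 1 ≤ Real.sqrt d := by
  rw [show (1 : ℝ) = Real.sqrt 1 by simp]
  exact Real.sqrt_le_sqrt (by exact_mod_cast Nat.one_le_of_lt hd)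

lemma sqrtd_pos {d : ℕ} (hd : 2 ≤ d) : 0 < Real.sqrt d :=
  lt_of_lt_of_le one_pos (one_le_sqrtd hd)

lemma dm1_pos {d : ℕ} (hd : 2 ≤ d) : (0 : ℝ) < (d : ℝ) - 1 := by
  have : (2 : ℝ) ≤ (d : ℝ) := by exact_mod_cast hd
  linarith

lemma Icc_split {d : ℕ} (hd : 2 ≤ d) :
    Finset.Icc 1 d = insert 1 (Finset.Icc 2 d) := by
  ext k; simp only [Finset.mem_Icc, Finset.mem_insert]; omega

lemma sum_eval {d : ℕ} (hd : 2 ≤ d) (f : ℕ → ℝ) (c : ℝ)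
    (hf : ∀ k ∈ Finset.Icc 2 d, f k = c) :
    ∑ k ∈ Finset.Icc 1 d, f k = f 1 + ((d : ℝ) - 1) * c := by
  rw [Icc_split hd, Finset.sum_insert (by simp), Finset.sum_congr rfl hf,
    Finset.sum_const, Nat.card_Icc]
  have hcast : ((d + 1 - 2 : ℕ) : ℝ) = (d : ℝ) - 1 := by
    have h1 : d + 1 - 2 = d - 1 := by omega
    rw [h1, Nat.cast_sub (by omega)]; simp
  rw [nsmul_eq_mul, hcast]

lemma lam_sq_one {d : ℕ} (hd : 2 ≤ d) :
    (lam d 1) ^ 2 = 1 - 1 / Real.sqrt d := by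
  rw [lam, if_pos rfl, Real.sq_sqrt]
  have h1 : 1 / Real.sqrt d ≤ 1 := by
    rw [div_le_one (sqrtd_pos hd)]; exact one_le_sqrtd hd
  linarith

lemma lam_sq_ne {d k : ℕ} (hd : 2 ≤ d) (hk : k ≠ 1) :
    (lam d k) ^ 2 = 1 / (Real.sqrt d * ((d : ℝ) - 1)) := by
  rw [lam, if_neg hk, Real.sq_sqrt]
  have hs := sqrtd_pos hd
  have hm := dm1_pos hd
  positivity

lemma sum_sq {d : ℕ} (hd : 2 ≤ d) :
    ∑ k ∈ Finset.Icc 1 d, (lam d k) ^ 2 = 1 := by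
  rw [sum_eval hd _ (1 / (Real.sqrt d * ((d : ℝ) - 1)))
    (fun k hk => lam_sq_ne hd (by simp only [Finset.mem_Icc] at hk; omega)), lam_sq_one hd]
  have hs := sqrtd_pos hd
  have hm := dm1_pos hd
  field_simp
  ring

lemma tendsto_sqrt_atTop : Tendsto Real.sqrt atTop atTop := by
  rw [tendsto_atTop_atTop]
  intro b
  refine ⟨b ^ 2, fun a ha => ?_⟩
  calc b ≤ |b| := le_abs_self b
    _ = Real.sqrt (b ^ 2) := (Real.sqrt_sq_eq_abs b).symm
    _ ≤ Real.sqrt a := Real.sqrt_le_sqrt ha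

lemma tendsto_sqrt_nat : Tendsto (fun d : ℕ => Real.sqrt d) atTop atTop :=
  tendsto_sqrt_atTop.comp tendsto_natCast_atTop_atTop

/-- Lower bound on the sum of Schmidt coefficients. -/
lemma sum_lam_ge {d : ℕ} (hd : 2 ≤ d) :
    Real.sqrt (Real.sqrt d / 2) ≤ ∑ k ∈ Finset.Icc 1 d, lam d k := by
  have hs := sqrtd_pos hd
  have hm := dm1_pos hd
  rw [sum_eval hd _ (Real.sqrt (1 / (Real.sqrt d * ((d : ℝ) - 1))))
    (fun k hk => by
      rw [lam, if_neg (by simp only [Finset.mem_Icc] at hk; omega)])]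
  have h1 : 0 ≤ lam d 1 := Real.sqrt_nonneg _
  have key : Real.sqrt (Real.sqrt d / 2) ≤
      ((d : ℝ) - 1) * Real.sqrt (1 / (Real.sqrt d * ((d : ℝ) - 1))) := by
    have heq : ((d : ℝ) - 1) * Real.sqrt (1 / (Real.sqrt d * ((d : ℝ) - 1)))
        = Real.sqrt (((d : ℝ) - 1) / Real.sqrt d) := by
      rw [show ((d : ℝ) - 1) * Real.sqrt (1 / (Real.sqrt d * ((d : ℝ) - 1)))
          = Real.sqrt (((d : ℝ) - 1) ^ 2) * Real.sqrt (1 / (Real.sqrt d * ((d : ℝ) - 1)))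
          by rw [Real.sqrt_sq hm.le],
        ← Real.sqrt_mul (by positivity)]
      congr 1
      field_simp
    rw [heq]
    apply Real.sqrt_le_sqrt
    rw [div_le_div_iff₀ two_pos hs]
    have hd2 : (2 : ℝ) ≤ (d : ℝ) := by exact_mod_cast hd
    have hss : Real.sqrt d * Real.sqrt d = d := Real.mul_self_sqrt (by positivity)
    nlinarith
  linarith

theorem eta_family_Emax_diverges_entropy_vanishes :
    (∀ d : ℕ, 2 ≤ d → ∑ k ∈ Finset.Icc 1 d, (lam d k) ^ 2 = 1) ∧
    Tendsto (fun d : ℕ => 2 * Real.logb 2 (∑ k ∈ Finset.Icc 1 d, lam d k))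
      atTop atTop ∧
    Tendsto (fun d : ℕ => -∑ k ∈ Finset.Icc 1 d, (lam d k) ^ 2 * Real.logb 2 ((lam d k) ^ 2))
      atTop (nhds 0) := by
  refine ⟨fun d hd => sum_sq hd, ?_, ?_⟩
  · -- Emax diverges
    have hbase : Tendsto (fun d : ℕ => 2 * Real.logb 2 (Real.sqrt (Real.sqrt d / 2)))
        atTop atTop := by
      refine Tendsto.const_mul_atTop two_pos ?_
      exact (Real.tendsto_logb_atTop (by norm_num : (1:ℝ) < 2)).comp
        (tendsto_sqrt_atTop.comp (tendsto_sqrt_nat.atTop_div_const two_pos))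
    refine tendsto_atTop_mono' atTop ?_ hbase
    filter_upwards [eventually_ge_atTop 2] with d hd
    have hpos : 0 < Real.sqrt (Real.sqrt d / 2) :=
      Real.sqrt_pos.2 (by have := sqrtd_pos hd; positivity)
    have hle := sum_lam_ge hd
    have hlog : Real.logb 2 (Real.sqrt (Real.sqrt d / 2)) ≤
        Real.logb 2 (∑ k ∈ Finset.Icc 1 d, lam d k) :=
      (Real.logb_le_logb (by norm_num) hpos (lt_of_lt_of_le hpos hle)).2 hle
    linarith
  · -- entropy vanishes
    have hg : Tendsto
        (fun d : ℕ => -((1 - 1 / Real.sqrt d) * Real.logb 2 (1 - 1 / Real.sqrt d)))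
        atTop (nhds 0) := by
      have hx : Tendsto (fun d : ℕ => 1 - 1 / Real.sqrt d) atTop (nhds 1) := by
        have h0 : Tendsto (fun d : ℕ => 1 / Real.sqrt d) atTop (nhds 0) := by
          simpa [one_div, Pi.inv_def] using tendsto_sqrt_nat.inv_tendsto_atTop
        simpa using tendsto_const_nhds.sub h0
      have hcont : ContinuousAt (fun t : ℝ => -(t * Real.logb 2 t)) 1 :=
        (continuousAt_id.mul (Real.continuousAt_logb one_ne_zero)).neg
      have := hcont.tendsto.comp hx
      simpa [Function.comp_def, Real.logb_one] using this
    have hh : Tendsto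
        (fun d : ℕ => Real.logb 2 (Real.sqrt d * ((d : ℝ) - 1)) / Real.sqrt d)
        atTop (nhds 0) := by
      have hupper : Tendsto (fun d : ℕ =>
          (2 / Real.log 2) * (Real.log d / (d : ℝ) ^ ((1:ℝ)/2))) atTop (nhds 0) := by
        have h1 := (isLittleO_log_rpow_atTop
          (by norm_num : (0:ℝ) < 1/2)).tendsto_div_nhds_zero
        have h2 := (h1.comp (tendsto_natCast_atTop_atTop (R := ℝ))).const_mul
          (2 / Real.log 2)
        simpa [Function.comp] using h2
      refine tendsto_of_tendsto_of_tendsto_of_le_of_le' tendsto_const_nhds hupper ?_ ?_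
      · filter_upwards [eventually_ge_atTop 2] with d hd
        have hs := sqrtd_pos hd
        have harg : 1 ≤ Real.sqrt d * ((d : ℝ) - 1) := by
          have h1 := one_le_sqrtd hd
          have h2 : (1 : ℝ) ≤ (d : ℝ) - 1 := by
            have : (2 : ℝ) ≤ (d : ℝ) := by exact_mod_cast hd
            linarith
          nlinarith
        exact div_nonneg (Real.logb_nonneg (by norm_num) harg) hs.le
      · filter_upwards [eventually_ge_atTop 2] with d hd
        have hs := sqrtd_pos hd
        have hm := dm1_pos hd
        have hd2 : (2 : ℝ) ≤ (d : ℝ) := by exact_mod_cast hd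
        have hsd : Real.sqrt d ≤ (d : ℝ) :=
          (Real.sqrt_le_left (by positivity)).2 (by nlinarith)
        have harg : Real.sqrt d * ((d : ℝ) - 1) ≤ (d : ℝ) ^ 2 := by nlinarith
        have hargpos : 0 < Real.sqrt d * ((d : ℝ) - 1) := by positivity
        have hlog : Real.logb 2 (Real.sqrt d * ((d : ℝ) - 1)) ≤
            Real.logb 2 ((d : ℝ) ^ 2) :=
          (Real.logb_le_logb (by norm_num) hargpos (by positivity)).2 harg
        have hstep : Real.logb 2 (Real.sqrt d * ((d : ℝ) - 1)) / Real.sqrt d ≤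
            Real.logb 2 ((d : ℝ) ^ 2) / Real.sqrt d := by gcongr
        refine hstep.trans (le_of_eq ?_)
        rw [Real.logb_pow, Real.logb, Real.sqrt_eq_rpow]
        push_cast
        ring
    have hsum : Tendsto (fun d : ℕ =>
        -((1 - 1 / Real.sqrt d) * Real.logb 2 (1 - 1 / Real.sqrt d)) +
        Real.logb 2 (Real.sqrt d * ((d : ℝ) - 1)) / Real.sqrt d) atTop (nhds 0) := by
      simpa using hg.add hh
    refine hsum.congr' ?_
    filter_upwards [eventually_ge_atTop 2] with d hd
    have hs := sqrtd_pos hd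
    have hm := dm1_pos hd
    rw [sum_eval hd _ ((1 / (Real.sqrt d * ((d : ℝ) - 1))) *
        Real.logb 2 (1 / (Real.sqrt d * ((d : ℝ) - 1))))
      (fun k hk => by
        rw [lam_sq_ne hd (by simp only [Finset.mem_Icc] at hk; omega)]),
      lam_sq_one hd]
    have hyL : ((d : ℝ) - 1) * ((1 / (Real.sqrt d * ((d : ℝ) - 1))) *
        Real.logb 2 (1 / (Real.sqrt d * ((d : ℝ) - 1)))) =
        -(Real.logb 2 (Real.sqrt d * ((d : ℝ) - 1)) / Real.sqrt d) := by
      rw [one_div, Real.logb_inv]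
      field_simp
    rw [hyL]
    ring

end
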